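/- Let s > 0, and for n ≥ 3 set t_n = 8π/(11·2^n) and ε_n = (8/(11π))·2^{−n}. Let f(x) = Σ_{j=3}^∞ 2^{−js} cos((11/8)·2^j·x) and F_n(t,x) = Σ_{j=3}^∞ 2^{−js} e^{−ε_n(121/64)·2^{2j}·t} cos((11/8)·2^j·(x − t)). Then for every real p with 1 ≤ p < ∞ and every n ≥ 3: 2^{ns} · ( ∫₀^{2π} |F_n(t_n, x) − f(x − t_n)|^p dx )^{1/p} ≥ (2π)^{1/p}·(1 − e^{−1})/2, even though t_n → 0⁺ and ε_n → 0⁺ as n → ∞. -/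

import Mathlib

open Real Filter MeasureTheory

/-- Integral of `cos (k(x-τ))` over a period vanishes for a nonzero integer `k`. -/
lemma aux_cosInt (k : ℤ) (τ : ℝ) (hk : k ≠ 0) :
    (∫ x in (0:ℝ)..(2*π), Real.cos ((k:ℝ) * (x - τ))) = 0 := by
  have hk' : (k:ℝ) ≠ 0 := Int.cast_ne_zero.mpr hk
  have h : ∀ x : ℝ, (k:ℝ) * (x - τ) = (k:ℝ) * x + (-(k*τ)) := fun x => by ring
  simp_rw [h]
  rw [intervalIntegral.integral_comp_mul_add Real.cos hk' (-(k*τ)), integral_cos]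
  have h2 : (k:ℝ) * (2*π) + -(↑k*τ) = (-((k:ℝ)*τ)) + k * (2*π) := by ring
  rw [h2, Real.sin_add_int_mul_two_pi]
  simp

/-- Orthogonality of the cosines with frequencies `11·2^a`. -/
lemma aux_cosOrtho (a b : ℕ) (τ : ℝ) :
    (∫ x in (0:ℝ)..(2*π),
      Real.cos (((11*2^a : ℕ):ℝ) * (x - τ)) * Real.cos (((11*2^b : ℕ):ℝ) * (x - τ)))
      = if a = b then π else 0 := by
  have hpt : ∀ x : ℝ, Real.cos (((11*2^a : ℕ):ℝ) * (x - τ)) * Real.cos (((11*2^b : ℕ):ℝ) * (x - τ))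
      = (Real.cos (((11*2^a + 11*2^b : ℤ):ℝ)*(x-τ)) + Real.cos (((11*2^a - 11*2^b : ℤ):ℝ)*(x-τ)))/2 := by
    intro x
    push_cast
    rw [show ((11*2^a:ℝ)+11*2^b)*(x-τ) = 11*2^a*(x-τ) + 11*2^b*(x-τ) from by ring,
      show ((11*2^a:ℝ)-11*2^b)*(x-τ) = 11*2^a*(x-τ) - 11*2^b*(x-τ) from by ring,
      Real.cos_add, Real.cos_sub]
    ring
  simp_rw [hpt]
  have hi1 : IntervalIntegrable (fun x => Real.cos (((11*2^a + 11*2^b : ℤ):ℝ)*(x-τ))) volume 0 (2*π) :=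
    (Real.continuous_cos.comp (by fun_prop)).intervalIntegrable _ _
  have hi2 : IntervalIntegrable (fun x => Real.cos (((11*2^a - 11*2^b : ℤ):ℝ)*(x-τ))) volume 0 (2*π) :=
    (Real.continuous_cos.comp (by fun_prop)).intervalIntegrable _ _
  rw [intervalIntegral.integral_div, intervalIntegral.integral_add hi1 hi2]
  rw [aux_cosInt _ _ (by positivity)]
  by_cases hab : a = b
  · subst hab
    simp only [sub_self, Int.cast_zero, zero_mul, Real.cos_zero, if_pos rfl]
    rw [intervalIntegral.integral_const]
    simp
  · rw [aux_cosInt _ _ ?_]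
    · simp [hab]
    · have : (2:ℤ)^a ≠ 2^b := fun h => hab (pow_right_injective₀ (by norm_num) (by norm_num) h)
      intro h
      apply this
      omega

section
variable {r τ : ℝ} {a : ℕ → ℝ} {G : ℝ → ℝ}

lemma aux_norm (hr0 : 0 < r) (ha : ∀ j, |a j| ≤ 1) (j : ℕ) (x y : ℝ) :
    ‖r^(j+3) * a j * Real.cos (((11*2^j : ℕ):ℝ) * (x - y))‖ ≤ r^(j+3) := by
  rw [Real.norm_eq_abs, abs_mul, abs_mul, abs_of_nonneg (by positivity : (0:ℝ) ≤ r^(j+3))]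
  have h1 := ha j
  have h2 := Real.abs_cos_le_one (((11*2^j : ℕ):ℝ) * (x - y))
  have h3 : (0:ℝ) ≤ r^(j+3) := by positivity
  calc r^(j+3) * |a j| * |Real.cos (((11*2^j : ℕ):ℝ) * (x - y))|
      ≤ r^(j+3) * |a j| := mul_le_of_le_one_right (by positivity) h2
    _ ≤ r^(j+3) * 1 := mul_le_mul_of_nonneg_left h1 h3
    _ = r^(j+3) := mul_one _

lemma aux_cont (hr0 : 0 < r) (hr1 : r < 1) (ha : ∀ j, |a j| ≤ 1)
    (hG : ∀ x, G x = ∑' j, r^(j+3) * a j * Real.cos (((11*2^j : ℕ):ℝ) * (x - τ))) :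
    Continuous G := by
  have hsum_r : Summable (fun j : ℕ => r ^ (j+3)) :=
    ((summable_geometric_of_lt_one hr0.le hr1).mul_right (r^3)).congr
      fun j => (pow_add r j 3).symm
  exact (continuous_tsum (fun j => by fun_prop) hsum_r
    (fun j x => aux_norm hr0 ha j x τ)).congr fun x => (hG x).symm

lemma aux_K (hr0 : 0 < r) (hr1 : r < 1) (ha : ∀ j, |a j| ≤ 1) (m : ℕ)
    (hG : ∀ x, G x = ∑' j, r^(j+3) * a j * Real.cos (((11*2^j : ℕ):ℝ) * (x - τ))) :
    (∫ x in (0:ℝ)..(2*π), G x * Real.cos (((11*2^m : ℕ):ℝ) * (x - τ)))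
      = π * (r^(m+3) * a m) := by
  have h2pi : (0:ℝ) < 2*π := by positivity
  have hsum_r : Summable (fun j : ℕ => r ^ (j+3)) :=
    ((summable_geometric_of_lt_one hr0.le hr1).mul_right (r^3)).congr
      fun j => (pow_add r j 3).symm
  set c : ℝ → ℝ := fun x => Real.cos (((11*2^m : ℕ):ℝ) * (x - τ)) with hc
  set u : ℕ → ℝ → ℝ := fun j x => r^(j+3) * a j * Real.cos (((11*2^j : ℕ):ℝ) * (x - τ)) with hu
  have hint : ∀ j : ℕ, Integrable (fun x => u j x * c x) (volume.restrict (Set.Ioc (0:ℝ) (2*π))) := by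
    intro j
    have : Continuous (fun x => u j x * c x) := by
      apply Continuous.mul
      · exact continuous_const.mul (Real.continuous_cos.comp (by fun_prop))
      · exact Real.continuous_cos.comp (by fun_prop)
    exact this.integrableOn_Ioc
  haveI : IsFiniteMeasure (volume.restrict (Set.Ioc (0:ℝ) (2*π))) :=
    ⟨by rw [Measure.restrict_apply_univ, Real.volume_Ioc]; exact ENNReal.ofReal_lt_top⟩
  have hbd : ∀ j x, ‖u j x * c x‖ ≤ r^(j+3) := by
    intro j x
    rw [norm_mul]
    calc ‖u j x‖ * ‖c x‖ ≤ r^(j+3) * 1 := by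
          apply mul_le_mul (aux_norm hr0 ha j x τ) ?_ (norm_nonneg _) (by positivity)
          rw [Real.norm_eq_abs]; exact Real.abs_cos_le_one _
      _ = r^(j+3) := mul_one _
  have hsum2 : Summable (fun j : ℕ => ∫ x in Set.Ioc (0:ℝ) (2*π), ‖u j x * c x‖) := by
    apply Summable.of_nonneg_of_le (fun j => integral_nonneg (fun x => norm_nonneg _))
      (fun j => ?_) (hsum_r.mul_left (2*π))
    calc (∫ x in Set.Ioc (0:ℝ) (2*π), ‖u j x * c x‖)
        ≤ ∫ _x in Set.Ioc (0:ℝ) (2*π), r^(j+3) :=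
          integral_mono (hint j).norm (integrable_const _) (fun x => hbd j x)
      _ = 2*π * r^(j+3) := by
          rw [integral_const, measureReal_restrict_apply_univ, Real.volume_real_Ioc, smul_eq_mul,
            max_eq_left (by simp [Real.pi_nonneg] : (0:ℝ) ≤ 2*π - 0)]
          ring
  have hswap : (∫ x in (0:ℝ)..(2*π), G x * c x)
      = ∑' j, ∫ x in (0:ℝ)..(2*π), u j x * c x := by
    rw [intervalIntegral.integral_of_le h2pi.le]
    have hpt : ∀ x : ℝ, G x * c x = ∑' j, u j x * c x := by
      intro x
      rw [hG x, ← tsum_mul_right]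
    calc (∫ x in Set.Ioc (0:ℝ) (2*π), G x * c x)
        = ∫ x in Set.Ioc (0:ℝ) (2*π), ∑' j, u j x * c x := by
          apply integral_congr_ae
          exact Eventually.of_forall (fun x => hpt x)
      _ = ∑' j, ∫ x in Set.Ioc (0:ℝ) (2*π), u j x * c x :=
          (integral_tsum_of_summable_integral_norm hint hsum2).symm
      _ = ∑' j, ∫ x in (0:ℝ)..(2*π), u j x * c x := by
          refine tsum_congr fun j => ?_
          rw [intervalIntegral.integral_of_le h2pi.le]
  rw [hswap]
  have hterm : ∀ j : ℕ, (∫ x in (0:ℝ)..(2*π), u j x * c x)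
      = (r^(j+3) * a j) * (if j = m then π else 0) := by
    intro j
    have : ∀ x : ℝ, u j x * c x
        = (r^(j+3) * a j) * (Real.cos (((11*2^j : ℕ):ℝ) * (x - τ)) * Real.cos (((11*2^m : ℕ):ℝ) * (x - τ))) := by
      intro x; simp only [hu, hc]; ring
    simp_rw [this]
    rw [intervalIntegral.integral_const_mul, aux_cosOrtho j m τ]
  simp_rw [hterm]
  rw [tsum_eq_single m (fun j hj => by rw [if_neg hj, mul_zero])]
  rw [if_pos rfl]
  ring

lemma aux_Lp {p : ℝ} (hr0 : 0 < r) (hr1 : r < 1) (hp : 1 ≤ p)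
    (ha : ∀ j, |a j| ≤ 1) (m : ℕ) (ham : a m = Real.exp (-1) - 1)
    (hG : ∀ x, G x = ∑' j, r^(j+3) * a j * Real.cos (((11*2^j : ℕ):ℝ) * (x - τ))) :
    (∫ x in (0:ℝ)..(2*π), |G x| ^ p) ^ (1/p)
      ≥ (2*π) ^ (1/p) * (1 - Real.exp (-1)) / 2 * r^(m+3) := by
  have h2pi : (0:ℝ) < 2*π := by positivity
  have hGc : Continuous G := aux_cont hr0 hr1 ha hG
  have hsum_r : Summable (fun j : ℕ => r ^ (j+3)) :=
    ((summable_geometric_of_lt_one hr0.le hr1).mul_right (r^3)).congr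
      fun j => (pow_add r j 3).symm
  have he1 : Real.exp (-1) ≤ 1 := Real.exp_le_one_iff.mpr (by norm_num)
  have hrm : (0:ℝ) ≤ r^(m+3) := by positivity
  have hKabs : π * (r^(m+3) * (1 - Real.exp (-1))) ≤ ∫ x in (0:ℝ)..(2*π), |G x| := by
    have hK := aux_K hr0 hr1 ha m hG
    rw [ham] at hK
    have h1 : |∫ x in (0:ℝ)..(2*π), G x * Real.cos (((11*2^m : ℕ):ℝ) * (x - τ))|
        ≤ ∫ x in (0:ℝ)..(2*π), |G x| := by
      refine (intervalIntegral.abs_integral_le_integral_abs h2pi.le).trans ?_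
      apply intervalIntegral.integral_mono_on h2pi.le
      · exact ((hGc.mul (Real.continuous_cos.comp (by fun_prop))).abs).intervalIntegrable _ _
      · exact hGc.abs.intervalIntegrable _ _
      · intro x _
        rw [abs_mul]
        exact mul_le_of_le_one_right (abs_nonneg _) (Real.abs_cos_le_one _)
    rw [hK] at h1
    have h2 : |π * (r^(m+3) * (Real.exp (-1) - 1))| = π * (r^(m+3) * (1 - Real.exp (-1))) := by
      rw [show π * (r^(m+3) * (Real.exp (-1) - 1)) = -(π * (r^(m+3) * (1 - Real.exp (-1)))) from by ring,
        abs_neg, abs_of_nonneg]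
      exact mul_nonneg Real.pi_nonneg (mul_nonneg hrm (by linarith))
    rw [h2] at h1
    exact h1
  rcases eq_or_lt_of_le hp with hp1 | hp1
  · subst hp1
    simp only [Real.rpow_one, one_div_one, ne_eq, one_ne_zero, not_false_eq_true, div_self]
    calc 2*π * (1 - Real.exp (-1)) / 2 * r^(m+3)
        = π * (r^(m+3) * (1 - Real.exp (-1))) := by ring
      _ ≤ ∫ x in (0:ℝ)..(2*π), |G x| := hKabs
  · set q := p.conjExponent with hq
    have hpq : p.HolderConjugate q := Real.HolderConjugate.conjExponent hp1
    set ν := volume.restrict (Set.Ioc (0:ℝ) (2*π)) with hν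
    haveI : IsFiniteMeasure ν :=
      ⟨by rw [hν, Measure.restrict_apply_univ, Real.volume_Ioc]; exact ENNReal.ofReal_lt_top⟩
    have hCb : ∀ x : ℝ, ‖|G x|‖ ≤ ∑' j : ℕ, r^(j+3) := by
      intro x
      rw [Real.norm_eq_abs, abs_abs, ← Real.norm_eq_abs, hG x]
      have hs' : Summable (fun j : ℕ => ‖r^(j+3) * a j * Real.cos (((11*2^j : ℕ):ℝ) * (x - τ))‖) :=
        Summable.of_nonneg_of_le (fun _ => norm_nonneg _) (fun j => aux_norm hr0 ha j x τ) hsum_r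
      exact (norm_tsum_le_tsum_norm hs').trans
        (Summable.tsum_le_tsum (fun j => aux_norm hr0 ha j x τ) hs' hsum_r)
    have memG : MemLp (fun x => |G x|) (ENNReal.ofReal p) ν :=
      MemLp.of_bound hGc.abs.aestronglyMeasurable _ (Eventually.of_forall hCb)
    have mem1 : MemLp (fun _ : ℝ => (1:ℝ)) (ENNReal.ofReal q) ν := memLp_const 1
    have holder := integral_mul_le_Lp_mul_Lq_of_nonneg hpq
      (Eventually.of_forall (fun x => abs_nonneg (G x)))
      (Eventually.of_forall (fun _ => zero_le_one)) memG mem1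
    simp only [mul_one, Real.one_rpow] at holder
    have hconst : (∫ _x : ℝ, (1:ℝ) ∂ν) = 2*π := by
      rw [hν, integral_const, measureReal_restrict_apply_univ, Real.volume_real_Ioc, smul_eq_mul, mul_one,
        max_eq_left (by simp [Real.pi_nonneg] : (0:ℝ) ≤ 2*π - 0)]
      ring
    rw [hconst] at holder
    have hIoc1 : (∫ x in (0:ℝ)..(2*π), |G x|) = ∫ x, |G x| ∂ν :=
      intervalIntegral.integral_of_le h2pi.le
    have hIocP : (∫ x in (0:ℝ)..(2*π), |G x| ^ p) = ∫ x, |G x| ^ p ∂ν :=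
      intervalIntegral.integral_of_le h2pi.le
    have hqpos : (0:ℝ) < (2*π) ^ (1/q) := Real.rpow_pos_of_pos h2pi _
    have key : (2*π) ^ (1/p) * (2*π) ^ (1/q) = 2*π := by
      rw [one_div, one_div, ← Real.rpow_add h2pi, hpq.inv_add_inv_eq_one, Real.rpow_one]
    rw [ge_iff_le, hIocP, ← mul_le_mul_iff_of_pos_right hqpos]
    calc (2*π) ^ (1/p) * (1 - Real.exp (-1)) / 2 * r^(m+3) * (2*π) ^ (1/q)
        = π * (r^(m+3) * (1 - Real.exp (-1))) := by
          linear_combination (r^(m+3) * (1 - Real.exp (-1)) / 2) * key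
      _ ≤ ∫ x, |G x| ∂ν := by rw [← hIoc1]; exact hKabs
      _ ≤ (∫ x, |G x| ^ p ∂ν) ^ (1/p) * (2*π) ^ (1/q) := holder

end

/-- Positive multiples of `(1/2)^n` tend to `0` from the right. -/
lemma aux_tendsto {c : ℝ} (hc : 0 < c) :
    Tendsto (fun n : ℕ => c * (1/2:ℝ)^n) atTop (nhdsWithin 0 (Set.Ioi 0)) := by
  rw [tendsto_nhdsWithin_iff]
  constructor
  · have h := tendsto_pow_atTop_nhds_zero_of_lt_one (by norm_num : (0:ℝ) ≤ 1/2) (by norm_num : (1/2:ℝ) < 1)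
    simpa using h.const_mul c
  · exact Eventually.of_forall fun k => Set.mem_Ioi.mpr (by positivity)

/-- For `s > 0`, `t_n = 8π/(11·2^n)`, `ε_n = (8/(11π))·2^{-n}`,
`f(x) = Σ_{j=3}^∞ 2^{-js} cos((11/8)·2^j·x)` and
`F_n(t,x) = Σ_{j=3}^∞ 2^{-js} e^{-ε_n(121/64)·2^{2j}·t} cos((11/8)·2^j·(x-t))`:
for every `1 ≤ p < ∞` and `n ≥ 3`,
`2^{ns} ‖F_n(t_n,·) - f(·-t_n)‖_{L^p(0,2π)} ≥ (2π)^{1/p}·(1 - e^{-1})/2`,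
even though `t_n → 0⁺` and `ε_n → 0⁺`. -/
theorem stmt_17 (s : ℝ) (hs : 0 < s) (f : ℝ → ℝ)
    (hf : ∀ x : ℝ, f x = ∑' j : ℕ,
      (2 : ℝ) ^ (-(((j : ℝ) + 3)) * s) * Real.cos ((11 / 8) * 2 ^ (j + 3) * x))
    (t ε : ℕ → ℝ)
    (ht : ∀ n, t n = 8 * π / (11 * 2 ^ n))
    (hε : ∀ n, ε n = (8 / (11 * π)) * 2 ^ (-(n : ℤ)))
    (F : ℕ → ℝ → ℝ → ℝ)
    (hF : ∀ (n : ℕ) (τ x : ℝ), F n τ x = ∑' j : ℕ,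
      (2 : ℝ) ^ (-(((j : ℝ) + 3)) * s)
        * Real.exp (-(ε n) * (121 / 64) * 2 ^ (2 * (j + 3)) * τ)
        * Real.cos ((11 / 8) * 2 ^ (j + 3) * (x - τ))) :
    (∀ p : ℝ, 1 ≤ p → ∀ n : ℕ, 3 ≤ n →
      (2 : ℝ) ^ ((n : ℝ) * s)
          * (∫ x in (0:ℝ)..(2 * π), |F n (t n) x - f (x - t n)| ^ p) ^ (1 / p)
        ≥ (2 * π) ^ (1 / p) * (1 - Real.exp (-1)) / 2) ∧
    Tendsto t atTop (nhdsWithin 0 (Set.Ioi 0)) ∧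
    Tendsto ε atTop (nhdsWithin 0 (Set.Ioi 0)) := by
  have hπ := Real.pi_pos
  refine ⟨?_, ?_, ?_⟩
  · intro p hp n hn
    set r : ℝ := (2:ℝ) ^ (-s) with hr_def
    have hr0 : 0 < r := Real.rpow_pos_of_pos two_pos _
    have hr1 : r < 1 := Real.rpow_lt_one_of_one_lt_of_neg one_lt_two (by linarith)
    have hsum_r : Summable (fun j : ℕ => r ^ (j+3)) :=
      ((summable_geometric_of_lt_one hr0.le hr1).mul_right (r^3)).congr
        fun j => (pow_add r j 3).symm
    have hc : ∀ j : ℕ, (2:ℝ) ^ (-(((j:ℝ)+3)) * s) = r ^ (j+3) := by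
      intro j
      rw [show (-(((j:ℝ)+3)) * s) = (-s) * (((j+3 : ℕ)):ℝ) from by push_cast; ring,
        Real.rpow_mul (by norm_num : (0:ℝ) ≤ 2), Real.rpow_natCast]
    set m := n - 3 with hm_def
    have hm : m + 3 = n := by omega
    set a : ℕ → ℝ := fun j => Real.exp (-((2:ℝ)^(2*(j+3)) / ((2:ℝ)^n)^2)) - 1 with ha_def
    have haj : ∀ j, |a j| ≤ 1 := by
      intro j
      have h1 : Real.exp (-((2:ℝ)^(2*(j+3)) / ((2:ℝ)^n)^2)) ≤ 1 :=
        Real.exp_le_one_iff.mpr (neg_nonpos.mpr (by positivity))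
      have h2 : 0 < Real.exp (-((2:ℝ)^(2*(j+3)) / ((2:ℝ)^n)^2)) := Real.exp_pos _
      rw [ha_def]
      exact abs_le.mpr ⟨by simp only; linarith, by simp only; linarith⟩
    have ham : a m = Real.exp (-1) - 1 := by
      have h1 : (2:ℝ)^(2*(m+3)) = ((2:ℝ)^n)^2 := by rw [hm, mul_comm 2 n, pow_mul]
      rw [ha_def]
      simp only [h1, div_self (by positivity : (((2:ℝ)^n)^2) ≠ 0)]
    have hexp : ∀ j : ℕ, -(ε n) * (121/64) * (2:ℝ)^(2*(j+3)) * (t n)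
        = -((2:ℝ)^(2*(j+3)) / ((2:ℝ)^n)^2) := by
      intro j
      rw [hε, ht, zpow_neg, zpow_natCast]
      have h2n : ((2:ℝ)^n) ≠ 0 := by positivity
      field_simp
      ring
    have hω : ∀ j : ℕ, (11/8 : ℝ) * 2^(j+3) = ((11*2^j : ℕ):ℝ) := by
      intro j
      push_cast
      rw [pow_add]
      ring
    have hG : ∀ x : ℝ, F n (t n) x - f (x - t n)
        = ∑' j, r^(j+3) * a j * Real.cos (((11*2^j : ℕ):ℝ) * (x - t n)) := by
      intro x
      rw [hF, hf]
      have h1 : Summable (fun j : ℕ => (2:ℝ) ^ (-(((j:ℝ)+3)) * s)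
          * Real.exp (-(ε n) * (121/64) * 2^(2*(j+3)) * (t n))
          * Real.cos ((11/8) * 2^(j+3) * (x - t n))) := by
        apply Summable.of_norm_bounded hsum_r
        intro j
        rw [hc j, hexp j, norm_mul, norm_mul, Real.norm_eq_abs, Real.norm_eq_abs,
          Real.norm_eq_abs, abs_of_nonneg (by positivity : (0:ℝ) ≤ r^(j+3)),
          abs_of_nonneg (Real.exp_pos _).le]
        have hE : Real.exp (-((2:ℝ)^(2*(j+3)) / ((2:ℝ)^n)^2)) ≤ 1 :=
          Real.exp_le_one_iff.mpr (neg_nonpos.mpr (by positivity))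
        calc r^(j+3) * Real.exp (-((2:ℝ)^(2*(j+3)) / ((2:ℝ)^n)^2)) * |Real.cos ((11/8) * 2^(j+3) * (x - t n))|
            ≤ r^(j+3) * Real.exp (-((2:ℝ)^(2*(j+3)) / ((2:ℝ)^n)^2)) :=
              mul_le_of_le_one_right (by positivity) (Real.abs_cos_le_one _)
          _ ≤ r^(j+3) * 1 := mul_le_mul_of_nonneg_left hE (by positivity)
          _ = r^(j+3) := mul_one _
      have h2 : Summable (fun j : ℕ => (2:ℝ) ^ (-(((j:ℝ)+3)) * s)
          * Real.cos ((11/8) * 2^(j+3) * (x - t n))) := by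
        apply Summable.of_norm_bounded hsum_r
        intro j
        rw [hc j, norm_mul, Real.norm_eq_abs, Real.norm_eq_abs,
          abs_of_nonneg (by positivity : (0:ℝ) ≤ r^(j+3))]
        exact mul_le_of_le_one_right (by positivity) (Real.abs_cos_le_one _)
      rw [← Summable.tsum_sub h1 h2]
      refine tsum_congr fun j => ?_
      rw [hc j, hexp j, hω j, ha_def]
      ring
    have hLp := aux_Lp (r := r) (τ := t n) (a := a)
      (G := fun x => F n (t n) x - f (x - t n)) hr0 hr1 hp haj m ham hG
    have h2ns : (2:ℝ) ^ ((n:ℝ) * s) * r^(m+3) = 1 := by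
      rw [hm, hr_def, ← Real.rpow_natCast ((2:ℝ)^(-s)) n,
        ← Real.rpow_mul (by norm_num : (0:ℝ) ≤ 2), ← Real.rpow_add (by norm_num : (0:ℝ) < 2),
        show (n:ℝ)*s + (-s)*(n:ℝ) = 0 from by ring, Real.rpow_zero]
    have h2nspos : (0:ℝ) < (2:ℝ) ^ ((n:ℝ) * s) := Real.rpow_pos_of_pos two_pos _
    calc (2*π) ^ (1/p) * (1 - Real.exp (-1)) / 2
        = (2:ℝ) ^ ((n:ℝ) * s) * ((2*π) ^ (1/p) * (1 - Real.exp (-1)) / 2 * r^(m+3)) := by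
          linear_combination ((2*π) ^ (1/p) * (1 - Real.exp (-1)) / 2) * h2ns.symm
      _ ≤ (2:ℝ) ^ ((n:ℝ) * s)
            * (∫ x in (0:ℝ)..(2 * π), |F n (t n) x - f (x - t n)| ^ p) ^ (1/p) :=
          mul_le_mul_of_nonneg_left hLp h2nspos.le
  · have hteq : t = fun k : ℕ => (8*π/11) * (1/2:ℝ)^k := by
      funext k
      rw [ht k]
      rw [div_pow, one_pow]
      field_simp
    rw [hteq]
    exact aux_tendsto (by positivity)
  · have hεeq : ε = fun k : ℕ => (8/(11*π)) * (1/2:ℝ)^k := by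
      funext k
      rw [hε k, zpow_neg, zpow_natCast, div_pow, one_pow, one_div]
    rw [hεeq]
    exact aux_tendsto (by positivity)
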